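/- In an integral domain A with formally real fraction field, the zero ideal is equal to the intersection of all real prime ideals of A. (An ideal I of A is real if whenever a₁² + ⋯ + a_k² ∈ I, then each a_i ∈ I.) -/

import Mathlib

/-- An ideal `I` of a commutative ring is real if whenever a finite sum of squares
lies in `I`, each term lies in `I`. -/
def Ideal.IsRealIdeal {A : Type} [CommRing A] (I : Ideal A) : Prop :=
  ∀ (k : ℕ) (a : Fin k → A), (∑ i, a i ^ 2) ∈ I → ∀ i, a i ∈ I

lemma bot_isReal (A : Type) [CommRing A] [IsDomain A]
    (hreal : ¬ IsSumSq (-1 : FractionRing A)) :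
    (⊥ : Ideal A).IsRealIdeal := by
  intro k a hsum i
  simp only [Ideal.mem_bot] at hsum ⊢
  by_contra hai
  apply hreal
  set f := algebraMap A (FractionRing A)
  have hf : Function.Injective f := IsFractionRing.injective A (FractionRing A)
  have hfa : f (a i) ≠ 0 := fun h => hai (hf (by simpa using h))
  have hK : ∑ j, f (a j) ^ 2 = 0 := by
    rw [← map_zero f, ← hsum, map_sum]; simp [map_pow]
  have key : (-1 : FractionRing A) =
      ∑ j ∈ Finset.univ.erase i, (f (a j) / f (a i)) * (f (a j) / f (a i)) := by
    have h1 : ∑ j ∈ Finset.univ.erase i, f (a j) ^ 2 = - (f (a i) ^ 2) := by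
      have := Finset.add_sum_erase Finset.univ (fun j => f (a j) ^ 2) (Finset.mem_univ i)
      rw [hK] at this
      linear_combination this
    have h2 : ∀ j, (f (a j) / f (a i)) * (f (a j) / f (a i))
        = f (a j) ^ 2 / f (a i) ^ 2 := by
      intro j; field_simp
    rw [Finset.sum_congr rfl (fun j _ => h2 j), ← Finset.sum_div, h1]
    field_simp
  rw [key]
  exact IsSumSq.sum_mul_self _ _

/-- in an integral domain with formally real fraction field, the zero
ideal is the intersection of all real prime ideals. -/
theorem stmt1 (A : Type) [CommRing A] [IsDomain A]
    (hreal : ¬ IsSumSq (-1 : FractionRing A)) :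
    (⊥ : Ideal A) = sInf {p : Ideal A | p.IsPrime ∧ p.IsRealIdeal} := by
  refine le_antisymm bot_le (sInf_le ?_)
  exact ⟨Ideal.bot_prime, bot_isReal A hreal⟩
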